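/- arXiv:0806.0342 — 2 statements merged into one kernel-verified Lean document; each statement's English description precedes it below -/
import Mathlib

section
/- Let p, p₀ ∈ ℝ^N with p ≠ 0 and |p₀| ≤ |p|/2. Then tr[(σ(p+p₀) − σ(p))²] ≤ 8 |p₀|²/|p|², where σ(q) = (q ⊗ q)/|q|². -/
noncomputable def sigmaMat {N : ℕ} (p : EuclideanSpace ℝ (Fin N)) : Matrix (Fin N) (Fin N) ℝ :=
  Matrix.of fun i j => p i * p j / ‖p‖ ^ 2

/-- If `p ≠ 0` and `|p₀| ≤ |p|/2`, then `tr[(σ(p+p₀) − σ(p))²] ≤ 8|p₀|²/|p|²`. -/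
theorem stmt_4 (N : ℕ) (p p₀ : EuclideanSpace ℝ (Fin N)) (hp : p ≠ 0)
    (h : ‖p₀‖ ≤ ‖p‖ / 2) :
    ((sigmaMat (p + p₀) - sigmaMat p) * (sigmaMat (p + p₀) - sigmaMat p)).trace ≤
      8 * ‖p₀‖ ^ 2 / ‖p‖ ^ 2 := by
  set q : EuclideanSpace ℝ (Fin N) := p + p₀ with hq
  have hpn : (0:ℝ) < ‖p‖ := norm_pos_iff.2 hp
  have hqn : ‖p‖ / 2 ≤ ‖q‖ := by
    have h1 : ‖p‖ ≤ ‖q‖ + ‖p₀‖ := by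
      have : p = q - p₀ := by simp [hq]
      rw [this]; exact norm_sub_le _ _
    linarith
  have hqn' : (0:ℝ) < ‖q‖ := lt_of_lt_of_le (by linarith) hqn
  have ha : (0:ℝ) < ‖p‖ ^ 2 := pow_pos hpn 2
  have hb : (0:ℝ) < ‖q‖ ^ 2 := pow_pos hqn' 2
  set a := ‖p‖ ^ 2 with haa
  set b := ‖q‖ ^ 2 with hbb
  set c := (inner ℝ p q : ℝ) with hcc
  have hs : ‖p₀‖ ^ 2 = b - 2 * c + a := by
    have h0 : p₀ = q - p := by simp [hq]
    rw [h0, norm_sub_sq_real, real_inner_comm]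
  have hS1 : ∑ i, q i * q i = b := by
    rw [hbb, ← real_inner_self_eq_norm_sq]
    simp [PiLp.inner_apply, RCLike.inner_apply, conj_trivial]
    rw [EuclideanSpace.real_norm_sq_eq]; simp [sq]
  have hS2 : ∑ i, p i * q i = c := by
    rw [hcc]
    simp [PiLp.inner_apply, RCLike.inner_apply, conj_trivial, mul_comm]
  have hS3 : ∑ i, p i * p i = a := by
    rw [haa, ← real_inner_self_eq_norm_sq]
    simp [PiLp.inner_apply, RCLike.inner_apply, conj_trivial]
    rw [EuclideanSpace.real_norm_sq_eq]; simp [sq]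
  have htr : ((sigmaMat q - sigmaMat p) * (sigmaMat q - sigmaMat p)).trace
      = 2 - 2 * c ^ 2 / (a * b) := by
    simp only [Matrix.trace, Matrix.diag, Matrix.mul_apply, Matrix.sub_apply, sigmaMat,
      Matrix.of_apply]
    have step : ∀ i ∈ Finset.univ, ∑ j, (q i * q j / b - p i * p j / a) *
        (q j * q i / b - p j * p i / a)
        = ∑ j, ((1 / b ^ 2) * ((q i * q i) * (q j * q j))
          - (2 / (a * b)) * ((p i * q i) * (p j * q j))
          + (1 / a ^ 2) * ((p i * p i) * (p j * p j))) := by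
      intro i _
      refine Finset.sum_congr rfl fun j _ => ?_
      field_simp
      ring
    rw [Finset.sum_congr rfl step]
    simp only [Finset.sum_add_distrib, Finset.sum_sub_distrib, ← Finset.mul_sum,
      ← Finset.sum_mul]
    rw [hS1, hS2, hS3]
    field_simp
    ring
  rw [htr, hs]
  have hab4 : a ≤ 4 * b := by
    have h2 : (‖p‖/2)^2 ≤ ‖q‖^2 := by
      apply pow_le_pow_left₀ (by positivity) hqn
    rw [haa, hbb]; nlinarith
  have hsnn : (0:ℝ) ≤ b - 2 * c + a := by rw [← hs]; positivity
  have heq : 2 - 2 * c ^ 2 / (a * b) = (2 * a * b - 2 * c ^ 2) / (a * b) := by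
    field_simp
  rw [heq, div_le_div_iff₀ (by positivity) ha]
  nlinarith [mul_nonneg ha.le (sq_nonneg (a - c)),
    mul_nonneg (mul_nonneg (by linarith : (0:ℝ) ≤ 4 * b - a) hsnn) ha.le]
end

section
/- Let A, B be symmetric N×N matrices and suppose that the 2N×2N block matrix with diagonal blocks A, −B and zero off-diagonal blocks is ≤ ζ times the block matrix [[I, −I], [−I, I]], for some ζ ≥ 0. Then for any nonzero p, q ∈ ℝ^N, tr(σ(p)A) − tr(σ(q)B) ≤ ζ · tr[(σ(p) − σ(q))²], where σ(p) = (p⊗p)/|p|². -/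
open Matrix

/-- If `diag(A, −B) ≤ ζ [[I,−I],[−I,I]]` (i.e. `⟨Aξ,ξ⟩ − ⟨Bη,η⟩ ≤ ζ|ξ−η|²` for all `ξ, η`),
then `tr(σ(p)A) − tr(σ(q)B) ≤ ζ tr[(σ(p) − σ(q))²]` for nonzero `p, q`. -/
theorem stmt_9 (N : ℕ) (A B : Matrix (Fin N) (Fin N) ℝ) (hA : A.IsSymm) (hB : B.IsSymm)
    (ζ : ℝ) (hζ : 0 ≤ ζ)
    (h : ∀ ξ η : Fin N → ℝ, ξ ⬝ᵥ A.mulVec ξ - η ⬝ᵥ B.mulVec η ≤ ζ * ∑ i, (ξ i - η i) ^ 2)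
    (p q : EuclideanSpace ℝ (Fin N)) (hp : p ≠ 0) (hq : q ≠ 0) :
    (sigmaMat p * A).trace - (sigmaMat q * B).trace ≤
      ζ * ((sigmaMat p - sigmaMat q) * (sigmaMat p - sigmaMat q)).trace := by
  have hnp : (0:ℝ) < ‖p‖ := norm_pos_iff.mpr hp
  have hnq : (0:ℝ) < ‖q‖ := norm_pos_iff.mpr hq
  set u : Fin N → ℝ := fun i => p i / ‖p‖ with hu_def
  set v : Fin N → ℝ := fun i => q i / ‖q‖ with hv_def
  have hpn : ∑ i, (p i) ^ 2 = ‖p‖ ^ 2 := by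
    rw [EuclideanSpace.norm_eq, Real.sq_sqrt (by positivity)]
    simp [sq_abs]
  have hqn : ∑ i, (q i) ^ 2 = ‖q‖ ^ 2 := by
    rw [EuclideanSpace.norm_eq, Real.sq_sqrt (by positivity)]
    simp [sq_abs]
  have hu1 : ∑ i, u i ^ 2 = 1 := by
    simp only [hu_def, div_pow, ← Finset.sum_div, hpn]
    field_simp
  have hv1 : ∑ i, v i ^ 2 = 1 := by
    simp only [hv_def, div_pow, ← Finset.sum_div, hqn]
    field_simp
  set c : ℝ := ∑ i, u i * v i with hc_def
  have hc2 : c ^ 2 ≤ 1 := by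
    have := Finset.sum_mul_sq_le_sq_mul_sq Finset.univ u v
    rw [hu1, hv1] at this
    simpa using this
  have hcabs : |c| ≤ 1 := by nlinarith [sq_abs c, abs_nonneg c]
  set s : ℝ := if 0 ≤ c then 1 else -1 with hs_def
  have hs2 : s ^ 2 = 1 := by
    by_cases h0 : 0 ≤ c <;> simp [hs_def, h0]
  have hsc : s * c = |c| := by
    by_cases h0 : 0 ≤ c
    · simp [hs_def, h0, abs_of_nonneg h0]
    · simp [hs_def, h0, abs_of_neg (lt_of_not_ge h0)]
  -- sigma entries
  have hsig_p : ∀ i j, sigmaMat p i j = u i * u j := by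
    intro i j
    simp only [sigmaMat, Matrix.of_apply, hu_def]
    rw [div_mul_div_comm, ← pow_two]
  have hsig_q : ∀ i j, sigmaMat q i j = v i * v j := by
    intro i j
    simp only [sigmaMat, Matrix.of_apply, hv_def]
    rw [div_mul_div_comm, ← pow_two]
  -- trace identities
  have hA' : (sigmaMat p * A).trace = u ⬝ᵥ A.mulVec u := by
    simp only [Matrix.trace, Matrix.diag_apply, Matrix.mul_apply, hsig_p, dotProduct,
      Matrix.mulVec, Finset.mul_sum]
    rw [Finset.sum_comm]
    exact Finset.sum_congr rfl fun j _ => Finset.sum_congr rfl fun i _ => by ring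
  have hB' : (sigmaMat q * B).trace = v ⬝ᵥ B.mulVec v := by
    simp only [Matrix.trace, Matrix.diag_apply, Matrix.mul_apply, hsig_q, dotProduct,
      Matrix.mulVec, Finset.mul_sum]
    rw [Finset.sum_comm]
    exact Finset.sum_congr rfl fun j _ => Finset.sum_congr rfl fun i _ => by ring
  have htr : ((sigmaMat p - sigmaMat q) * (sigmaMat p - sigmaMat q)).trace = 2 - 2 * c ^ 2 := by
    have step : ((sigmaMat p - sigmaMat q) * (sigmaMat p - sigmaMat q)).trace
        = ∑ i, ∑ j, (u i ^ 2 * u j ^ 2 - 2 * ((u i * v i) * (u j * v j)) + v i ^ 2 * v j ^ 2) := by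
      simp only [Matrix.trace, Matrix.diag_apply, Matrix.mul_apply, Matrix.sub_apply,
        hsig_p, hsig_q]
      exact Finset.sum_congr rfl fun i _ => Finset.sum_congr rfl fun j _ => by ring
    rw [step]
    have e1 : ∀ f g : Fin N → ℝ, ∑ i : Fin N, ∑ j : Fin N, f i * g j
        = (∑ i, f i) * (∑ j, g j) := fun f g => (Finset.sum_mul_sum _ _ _ _).symm
    simp only [Finset.sum_add_distrib, Finset.sum_sub_distrib]
    have t1 : ∑ i : Fin N, ∑ j : Fin N, u i ^ 2 * u j ^ 2 = 1 := by rw [e1, hu1]; ring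
    have t3 : ∑ i : Fin N, ∑ j : Fin N, v i ^ 2 * v j ^ 2 = 1 := by rw [e1, hv1]; ring
    have t2 : ∑ i : Fin N, ∑ j : Fin N, 2 * ((u i * v i) * (u j * v j)) = 2 * c ^ 2 := by
      simp only [← Finset.mul_sum, ← Finset.sum_mul]
      ring
    rw [t1, t3, t2]; ring
  -- apply hypothesis
  have key := h u (fun i => s * v i)
  have hBv : (fun i => s * v i) ⬝ᵥ B.mulVec (fun i => s * v i) = v ⬝ᵥ B.mulVec v := by
    simp only [dotProduct, Matrix.mulVec, Finset.mul_sum]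
    refine Finset.sum_congr rfl fun i _ => Finset.sum_congr rfl fun j _ => ?_
    calc s * v i * (B i j * (s * v j)) = s ^ 2 * (v i * (B i j * v j)) := by ring
      _ = v i * (B i j * v j) := by rw [hs2]; ring
  have hsum : ∑ i, (u i - s * v i) ^ 2 = 2 - 2 * |c| := by
    have : ∀ i, (u i - s * v i) ^ 2 = u i ^ 2 - 2 * s * (u i * v i) + s ^ 2 * v i ^ 2 := by
      intro i; ring
    simp only [this, Finset.sum_add_distrib, Finset.sum_sub_distrib, ← Finset.mul_sum,
      hu1, hv1, hc_def.symm]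
    rw [hs2]
    nlinarith [hsc]
  rw [hBv] at key
  rw [hsum] at key
  rw [hA', hB', htr]
  have hfin : ζ * (2 - 2 * |c|) ≤ ζ * (2 - 2 * c ^ 2) := by
    apply mul_le_mul_of_nonneg_left _ hζ
    nlinarith [sq_abs c, hcabs, abs_nonneg c]
  linarith [key]
end
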